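/- The cochain DG algebra B₁ with underlying graded algebra k⟨x₁,x₂⟩ (generators in degree 1) and differential given by ∂(x₁) = x₁², ∂(x₂) = x₂x₁ has trivial cohomology: H⁰(B₁) = k and Hⁱ(B₁) = 0 for all i ≥ 1. -/

import Mathlib

/-- The degree-`i` homogeneous component of the free algebra `k⟨x_1,...,x_n⟩`
with all generators in degree `1`: the span of the words of length `i`. -/
noncomputable def deg (k : Type*) [CommRing k] (n : ℕ) (i : ℕ) :
    Submodule k (FreeAlgebra k (Fin n)) :=
  Submodule.span k
    {w | ∃ f : Fin i → Fin n, w = (List.ofFn fun j => FreeAlgebra.ι k (f j)).prod}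

section Stmt7Aux
open FreeAlgebra FreeMonoid
open FreeAlgebra FreeMonoid
variable {k : Type*} [Field k]
noncomputable abbrev B : Module.Basis (FreeMonoid (Fin 2)) k (FreeAlgebra k (Fin 2)) :=
  FreeAlgebra.basisFreeMonoid k (Fin 2)

lemma b_apply (w : FreeMonoid (Fin 2)) :
    (B : Module.Basis (FreeMonoid (Fin 2)) k _) w =
      (equivMonoidAlgebraFreeMonoid (R := k) (X := Fin 2)).symm
        (MonoidAlgebra.single w 1) := by
  simp only [B, FreeAlgebra.basisFreeMonoid, Module.Basis.map_apply, Finsupp.coe_basisSingleOne,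
    AlgEquiv.toLinearEquiv_apply, MonoidAlgebra.single]
  rfl

lemma b_ofList (l : List (Fin 2)) :
    (B : Module.Basis (FreeMonoid (Fin 2)) k _) (ofList l) = (l.map (FreeAlgebra.ι k)).prod := by
  induction l with
  | nil =>
    rw [b_apply]
    have : (MonoidAlgebra.single (ofList ([] : List (Fin 2))) (1:k)) = 1 := rfl
    rw [this, map_one]; simp
  | cons x xs ih =>
    rw [b_apply]
    have h1 : ofList (x :: xs) = of x * ofList xs := rfl
    have h2 : (MonoidAlgebra.single (of x * ofList xs) (1:k)) =
        MonoidAlgebra.single (of x) 1 * MonoidAlgebra.single (ofList xs) 1 := by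
      rw [MonoidAlgebra.single_mul_single, one_mul]
    have h3 : (equivMonoidAlgebraFreeMonoid (R := k) (X := Fin 2)).symm
        (MonoidAlgebra.single (of x) 1) = FreeAlgebra.ι k x := by
      apply (equivMonoidAlgebraFreeMonoid (R := k) (X := Fin 2)).injective
      rw [AlgEquiv.apply_symm_apply]
      rw [show (equivMonoidAlgebraFreeMonoid (R := k) (X := Fin 2)) (FreeAlgebra.ι k x)
        = MonoidAlgebra.of k (FreeMonoid (Fin 2)) (of x) from by
          simp [equivMonoidAlgebraFreeMonoid]]
      rfl
    rw [h1, h2, map_mul, h3, ← b_apply (ofList xs), ih]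
    simp

/-- strip the last letter `s` from each word -/
noncomputable def strip (s : Fin 2) :
    FreeAlgebra k (Fin 2) →ₗ[k] FreeAlgebra k (Fin 2) :=
  (B : Module.Basis (FreeMonoid (Fin 2)) k _).constr k fun w =>
    if (toList w).getLast? = some s then B (ofList (toList w).dropLast) else 0

lemma strip_b (s : Fin 2) (w : FreeMonoid (Fin 2)) :
    strip s ((B : Module.Basis (FreeMonoid (Fin 2)) k _) w) =
      if (toList w).getLast? = some s then B (ofList (toList w).dropLast) else 0 :=
  Module.Basis.constr_basis _ _ _ _

lemma mul_gen (l : List (Fin 2)) (t : Fin 2) :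
    (l.map (FreeAlgebra.ι k)).prod * FreeAlgebra.ι k t
      = ((l ++ [t]).map (FreeAlgebra.ι k)).prod := by
  simp

lemma strip_mul_ι (s t : Fin 2) (a : FreeAlgebra k (Fin 2)) :
    strip s (a * FreeAlgebra.ι k t) = if t = s then a else 0 := by
  have hmaps : (strip (k := k) s).comp (LinearMap.mulRight k (FreeAlgebra.ι k t))
      = if t = s then LinearMap.id else 0 := by
    apply (B : Module.Basis (FreeMonoid (Fin 2)) k _).ext
    intro w
    have hw : (B : Module.Basis (FreeMonoid (Fin 2)) k _) w = ((toList w).map (FreeAlgebra.ι k)).prod := by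
      rw [← b_ofList, ofList_toList]
    simp only [LinearMap.comp_apply, LinearMap.mulRight_apply]
    rw [hw, mul_gen, ← b_ofList, strip_b]
    rw [toList_ofList, List.getLast?_concat, List.dropLast_concat, ofList_toList]
    by_cases h : t = s
    · simp [h, hw]
    · simp [h, Ne.symm, fun hh : (s:Fin 2) = t => h hh.symm]
  have := LinearMap.congr_fun hmaps a
  simp only [LinearMap.comp_apply, LinearMap.mulRight_apply] at this
  rw [this]
  by_cases h : t = s <;> simp [h]


lemma gen_eq {i : ℕ} (f : Fin i → Fin 2) :
    (List.ofFn fun j => FreeAlgebra.ι k (f j)).prod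
      = ((List.ofFn f).map (FreeAlgebra.ι k)).prod := by
  rw [List.map_ofFn]; rfl

lemma mem_deg_of_list {i : ℕ} (l : List (Fin 2)) (h : l.length = i) :
    (l.map (FreeAlgebra.ι k)).prod ∈ deg k 2 i := by
  subst h
  refine Submodule.subset_span ⟨fun j => l.get j, ?_⟩
  rw [gen_eq, List.ofFn_get]

lemma mem_deg_b {i : ℕ} (l : List (Fin 2)) (h : l.length = i) :
    (B : Module.Basis (FreeMonoid (Fin 2)) k _) (ofList l) ∈ deg k 2 i := by
  rw [b_ofList]; exact mem_deg_of_list l h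

lemma strip_mem_deg {i : ℕ} (s : Fin 2) {a : FreeAlgebra k (Fin 2)}
    (ha : a ∈ deg k 2 (i + 1)) : strip s a ∈ deg k 2 i := by
  induction ha using Submodule.span_induction with
  | mem w hw =>
    obtain ⟨f, rfl⟩ := hw
    rw [gen_eq, ← b_ofList, strip_b]
    split
    · exact mem_deg_b _ (by simp)
    · exact Submodule.zero_mem _
  | zero => simp
  | add x y _ _ hx hy => rw [map_add]; exact Submodule.add_mem _ hx hy
  | smul c x _ hx => rw [map_smul]; exact Submodule.smul_mem _ _ hx

lemma fin2_cases (t : Fin 2) : t = 0 ∨ t = 1 := by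
  rcases t with ⟨_|_|tv, h⟩
  · exact Or.inl rfl
  · exact Or.inr rfl
  · omega

lemma keyC (d : FreeAlgebra k (Fin 2) →ₗ[k] FreeAlgebra k (Fin 2))
    (hL : ∀ (p : ℕ) (a b : FreeAlgebra k (Fin 2)), a ∈ deg k 2 p →
      d (a * b) = d a * b + ((-1 : k) ^ p) • (a * d b))
    (h1 : d (FreeAlgebra.ι k 0) = FreeAlgebra.ι k 0 * FreeAlgebra.ι k 0)
    (h2 : d (FreeAlgebra.ι k 1) = FreeAlgebra.ι k 1 * FreeAlgebra.ι k 0)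
    (i : ℕ) {a : FreeAlgebra k (Fin 2)} (ha : a ∈ deg k 2 (i + 1)) :
    strip 0 (d a) = d (strip 0 a) + ((-1 : k) ^ i) • a ∧
    strip 1 (d a) = d (strip 1 a) := by
  induction ha using Submodule.span_induction with
  | mem w hw =>
    obtain ⟨f, rfl⟩ := hw
    set l : List (Fin 2) := List.ofFn f with hl
    have hlen : l.length = i + 1 := by simp [hl]
    have hne : l ≠ [] := by intro h; rw [h] at hlen; simp at hlen
    obtain ⟨l', t, hsplit⟩ : ∃ l' t, l' ++ [t] = l :=
      ⟨l.dropLast, l.getLast hne, List.dropLast_concat_getLast hne⟩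
    have hcast : (List.ofFn fun j => FreeAlgebra.ι k (f j)).prod
        = (l'.map (FreeAlgebra.ι k)).prod * FreeAlgebra.ι k t := by
      rw [gen_eq, ← hl, ← hsplit, ← mul_gen]
    set p := (l'.map (FreeAlgebra.ι k)).prod with hp
    have hlen' : l'.length = i := by
      rw [← hsplit, List.length_append] at hlen; simpa using hlen
    have hpmem : p ∈ deg k 2 i := mem_deg_of_list l' hlen'
    have hd : d (p * FreeAlgebra.ι k t)
        = d p * FreeAlgebra.ι k t + ((-1:k)^i) • (p * d (FreeAlgebra.ι k t)) :=
      hL i p _ hpmem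
    rw [hcast, hd]
    rcases fin2_cases t with rfl | rfl
    · -- t = 0
      rw [h1]
      rw [show p * (FreeAlgebra.ι k 0 * FreeAlgebra.ι k 0)
          = (p * FreeAlgebra.ι k 0) * FreeAlgebra.ι k 0 from (mul_assoc _ _ _).symm]
      constructor
      · rw [map_add, map_smul, strip_mul_ι, strip_mul_ι, strip_mul_ι]
        norm_num
      · rw [map_add, map_smul, strip_mul_ι, strip_mul_ι, strip_mul_ι]
        norm_num
    · -- t = 1
      rw [h2]
      rw [show p * (FreeAlgebra.ι k 1 * FreeAlgebra.ι k 0)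
          = (p * FreeAlgebra.ι k 1) * FreeAlgebra.ι k 0 from (mul_assoc _ _ _).symm]
      constructor
      · rw [map_add, map_smul, strip_mul_ι, strip_mul_ι, strip_mul_ι]
        norm_num
      · rw [map_add, map_smul, strip_mul_ι, strip_mul_ι, strip_mul_ι]
        norm_num
  | zero => simp
  | add x y _ _ hx hy =>
    obtain ⟨hx0, hx1⟩ := hx; obtain ⟨hy0, hy1⟩ := hy
    constructor
    · simp only [map_add, hx0, hy0]; module
    · simp only [map_add, hx1, hy1]
  | smul c x _ hx =>
    obtain ⟨hx0, hx1⟩ := hx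
    constructor
    · simp only [map_smul, hx0]; module
    · simp only [map_smul, hx1]

end Stmt7Aux


/-- the cochain DG algebra `B₁` with underlying graded algebra
`k⟨x₁,x₂⟩` (generators in degree 1) and differential `∂(x₁) = x₁²`,
`∂(x₂) = x₂x₁` has trivial cohomology: `H⁰(B₁) = k` (every degree-0 element is
a cocycle, and nothing maps into degree 0) and `Hⁱ(B₁) = 0` for `i ≥ 1`. -/
theorem stmt7 {k : Type*} [Field k] [CharZero k]
    (d : FreeAlgebra k (Fin 2) →ₗ[k] FreeAlgebra k (Fin 2))
    (hL : ∀ (p : ℕ) (a b : FreeAlgebra k (Fin 2)), a ∈ deg k 2 p →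
      d (a * b) = d a * b + ((-1 : k) ^ p) • (a * d b))
    (h1 : d (FreeAlgebra.ι k 0) = FreeAlgebra.ι k 0 * FreeAlgebra.ι k 0)
    (h2 : d (FreeAlgebra.ι k 1) = FreeAlgebra.ι k 1 * FreeAlgebra.ι k 0)
    (hdd : ∀ x, d (d x) = 0) :
    (∀ a ∈ deg k 2 0, d a = 0) ∧
    (∀ i : ℕ, 1 ≤ i → ∀ a ∈ deg k 2 i, d a = 0 →
      ∃ b ∈ deg k 2 (i - 1), d b = a) := by
  constructor
  · -- degree 0
    have hone : (1 : FreeAlgebra k (Fin 2)) ∈ deg k 2 0 :=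
      Submodule.subset_span ⟨Fin.elim0, by simp⟩
    have hd1 : d 1 = 0 := by
      have h := hL 0 1 1 hone
      simp only [mul_one, pow_zero, one_smul, one_mul] at h
      have := h.symm
      rwa [add_eq_left] at this
    intro a ha
    induction ha using Submodule.span_induction with
    | mem w hw =>
      obtain ⟨f, rfl⟩ := hw
      simpa using hd1
    | zero => simp
    | add x y _ _ hx hy => rw [map_add, hx, hy, add_zero]
    | smul c x _ hx => rw [map_smul, hx, smul_zero]
  · intro i hi a ha hda
    obtain ⟨j, rfl⟩ : ∃ j, i = j + 1 := ⟨i - 1, by omega⟩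
    have hC := (keyC d hL h1 h2 j ha).1
    rw [hda, map_zero] at hC
    refine ⟨((-1 : k) ^ (j + 1)) • strip 0 a, ?_, ?_⟩
    · have hj : j + 1 - 1 = j := rfl
      rw [hj]
      exact Submodule.smul_mem _ _ (strip_mem_deg 0 ha)
    · rw [map_smul]
      have hds : d (strip 0 a) = -(((-1 : k) ^ j) • a) :=
        eq_neg_of_add_eq_zero_left hC.symm
      rw [hds, smul_neg, smul_smul]
      have hpow : (-1 : k) ^ (j + 1) * (-1 : k) ^ j = -1 := by
        rw [← pow_add]
        have : j + 1 + j = 2 * j + 1 := by omega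
        rw [this, pow_succ, pow_mul]
        norm_num
      rw [hpow]
      simp
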